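/- For n ≥ 2, the Gauss curvature of the half-plane ℍ = {(x,r) : r > 0} equipped with the conformal metric g = r^{2(n−1)} e^{−(x²+r²)/2} (dx² + dr²) equals K(x,r) = (r² + (n−1))·r^{−2n}·e^{(x²+r²)/2}; in particular K > 0 everywhere on ℍ. -/

import Mathlib

/-- The Gauss curvature of the metric r^{2(n-1)} e^{-(x²+r²)/2}(dx²+dr²) on the
half-plane, computed via K = -e^{-2φ}Δφ with φ = (n-1)ln r - (x²+r²)/4, equals
(r² + (n-1)) r^{-2n} e^{(x²+r²)/2}, which is positive. -/
theorem stmt_5 (n : ℕ) (hn : 2 ≤ n) (x r : ℝ) (hr : 0 < r) :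
    -Real.exp (-2 * (((n : ℝ) - 1) * Real.log r - (x ^ 2 + r ^ 2) / 4)) *
        (deriv (deriv (fun t : ℝ => ((n : ℝ) - 1) * Real.log r - (t ^ 2 + r ^ 2) / 4)) x +
         deriv (deriv (fun t : ℝ => ((n : ℝ) - 1) * Real.log t - (x ^ 2 + t ^ 2) / 4)) r)
      = (r ^ 2 + ((n : ℝ) - 1)) / r ^ (2 * n) * Real.exp ((x ^ 2 + r ^ 2) / 2) ∧
    0 < (r ^ 2 + ((n : ℝ) - 1)) / r ^ (2 * n) * Real.exp ((x ^ 2 + r ^ 2) / 2) := by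
  have hd1 : deriv (fun t : ℝ => ((n : ℝ) - 1) * Real.log r - (t ^ 2 + r ^ 2) / 4)
      = fun t : ℝ => -(t / 2) := by
    funext t
    have h : HasDerivAt (fun t : ℝ => ((n : ℝ) - 1) * Real.log r - (t ^ 2 + r ^ 2) / 4)
        (-(t / 2)) t := by
      have h1 := ((hasDerivAt_pow 2 t).add_const (r ^ 2)).div_const 4
      have h2 := (hasDerivAt_const t (((n : ℝ) - 1) * Real.log r)).fun_sub h1
      refine h2.congr_deriv ?_
      ring
    exact h.deriv
  have hdd1 : deriv (deriv (fun t : ℝ => ((n : ℝ) - 1) * Real.log r - (t ^ 2 + r ^ 2) / 4)) x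
      = -(1 / 2) := by
    rw [hd1]
    have h : HasDerivAt (fun t : ℝ => -(t / 2)) (-(1 / 2)) x := by
      have := ((hasDerivAt_id x).div_const 2).fun_neg
      simpa using this
    exact h.deriv
  have hev : deriv (fun t : ℝ => ((n : ℝ) - 1) * Real.log t - (x ^ 2 + t ^ 2) / 4)
      =ᶠ[nhds r] fun t : ℝ => ((n : ℝ) - 1) / t - t / 2 := by
    filter_upwards [(isOpen_Ioi : IsOpen (Set.Ioi (0:ℝ))).mem_nhds hr] with t ht
    have ht' : t ≠ 0 := ne_of_gt ht
    have h : HasDerivAt (fun t : ℝ => ((n : ℝ) - 1) * Real.log t - (x ^ 2 + t ^ 2) / 4)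
        (((n : ℝ) - 1) / t - t / 2) t := by
      have hlog := (Real.hasDerivAt_log ht').const_mul ((n : ℝ) - 1)
      have h1 := ((hasDerivAt_pow 2 t).const_add (x ^ 2)).div_const 4
      have h2 := hlog.fun_sub h1
      refine h2.congr_deriv ?_
      field_simp
      ring
    exact h.deriv
  have hdd2 : deriv (deriv (fun t : ℝ => ((n : ℝ) - 1) * Real.log t - (x ^ 2 + t ^ 2) / 4)) r
      = -(((n : ℝ) - 1) / r ^ 2) - 1 / 2 := by
    rw [hev.deriv_eq]
    have hinv := (hasDerivAt_inv (ne_of_gt hr)).const_mul ((n : ℝ) - 1)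
    have hid := (hasDerivAt_id r).div_const 2
    have h2 := hinv.fun_sub hid
    have heq : (fun t : ℝ => ((n : ℝ) - 1) / t - t / 2)
        = fun t : ℝ => ((n : ℝ) - 1) * t⁻¹ - id t / 2 := by
      funext t; simp [div_eq_mul_inv]
    rw [heq, h2.deriv]
    field_simp
  rw [hdd1, hdd2]
  -- rewrite exp term
  have hm : (n : ℝ) - 1 = ((n - 1 : ℕ) : ℝ) := by
    have : (1:ℕ) ≤ n := le_trans (by norm_num) hn
    push_cast [Nat.cast_sub this]
    ring
  have hexp : Real.exp (-2 * (((n : ℝ) - 1) * Real.log r - (x ^ 2 + r ^ 2) / 4))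
      = (r ^ (2 * (n - 1)))⁻¹ * Real.exp ((x ^ 2 + r ^ 2) / 2) := by
    rw [hm]
    rw [show -2 * ((((n - 1 : ℕ) : ℝ)) * Real.log r - (x ^ 2 + r ^ 2) / 4)
        = -(((2 * (n - 1) : ℕ) : ℝ) * Real.log r) + (x ^ 2 + r ^ 2) / 2 by push_cast; ring]
    rw [Real.exp_add, Real.exp_neg, Real.exp_nat_mul, Real.exp_log hr]
  rw [hexp]
  have hrpow : r ^ (2 * n) = r ^ (2 * (n - 1)) * r ^ 2 := by
    rw [← pow_add]
    congr 1
    omega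
  constructor
  · rw [hrpow]
    have hr2 : r ^ (2 * (n - 1)) ≠ 0 := pow_ne_zero _ (ne_of_gt hr)
    have hr0 : r ≠ 0 := ne_of_gt hr
    field_simp
    ring
  · apply mul_pos _ (Real.exp_pos _)
    apply div_pos
    · have : (1:ℝ) ≤ (n : ℝ) := by exact_mod_cast le_trans (by norm_num) hn
      nlinarith [sq_nonneg r, hr]
    · exact pow_pos hr _
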